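/- arXiv:2508.02052 — 5 statements merged into one kernel-verified Lean document; each statement's English description precedes it below -/
import Mathlib

section
/- For all complex z with Re(z) ≥ 0, z ≠ 1, and |z−1| < R, the ratio |f(z)−1| / |1−g(z)| equals 1/(√2 |p(z)|), where f(z) = 2/(1+√(1−z²)) − 1, g(z) = 1 − 2√(2(1−z)), and p(z) = (1+z)^{−1/2} + (1−z)^{1/2} (principal branches). -/
open Complex

noncomputable def fSOR (z : ℂ) : ℂ := 2 / (1 + (1 - z ^ 2) ^ ((1 : ℂ) / 2)) - 1
noncomputable def gSOR (z : ℂ) : ℂ := 1 - 2 * (2 * (1 - z)) ^ ((1 : ℂ) / 2)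
noncomputable def pSOR (z : ℂ) : ℂ := (1 + z) ^ (-(1 / 2) : ℂ) + (1 - z) ^ ((1 : ℂ) / 2)

lemma sqrt_re_nonneg' (x : ℂ) : 0 ≤ (x ^ ((1:ℂ)/2)).re := by
  have h : ((1:ℂ)/2) = ((1/2 : ℝ) : ℂ) := by norm_num
  rw [h, Complex.cpow_ofReal_re]
  apply mul_nonneg (Real.rpow_nonneg (norm_nonneg x) _)
  apply Real.cos_nonneg_of_mem_Icc
  constructor
  · have := Complex.neg_pi_lt_arg x; linarith
  · have := Complex.arg_le_pi x; linarith

lemma mul_sqrt_re_pos' (a b : ℂ) (ha : a ≠ 0) (hb : b ≠ 0)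
    (h : |a.arg + b.arg| < Real.pi) :
    0 < (a ^ ((1:ℂ)/2) * b ^ ((1:ℂ)/2)).re := by
  rw [Complex.cpow_def_of_ne_zero ha, Complex.cpow_def_of_ne_zero hb, ← Complex.exp_add,
    Complex.exp_re]
  apply mul_pos (Real.exp_pos _)
  apply Real.cos_pos_of_mem_Ioo
  have him : (Complex.log a * ((1:ℂ)/2) + Complex.log b * ((1:ℂ)/2)).im
      = (a.arg + b.arg) / 2 := by
    simp [Complex.add_im, Complex.mul_im, Complex.log_im]
    ring
  rw [him]
  rw [abs_lt] at h
  constructor <;> linarith [h.1, h.2]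

theorem stmt0 (R : ℝ) (z : ℂ) (hre : 0 ≤ z.re) (hz : z ≠ 1)
    (hslit : ¬ (z.im = 0 ∧ 1 ≤ z.re)) (hR : ‖z - 1‖ < R) :
    ‖fSOR z - 1‖ / ‖1 - gSOR z‖
      = 1 / (Real.sqrt 2 * ‖pSOR z‖) := by
  set a : ℂ := 1 + z with hadef
  set b : ℂ := 1 - z with hbdef
  set s : ℂ := a ^ ((1:ℂ)/2) with hsdef
  set t : ℂ := b ^ ((1:ℂ)/2) with htdef
  set u : ℂ := (1 - z^2) ^ ((1:ℂ)/2) with hudef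
  have hare : 0 < a.re := by
    rw [hadef]; simp only [Complex.add_re, Complex.one_re]; linarith
  have ha0 : a ≠ 0 := fun h => by rw [h] at hare; simp at hare
  have hb0 : b ≠ 0 := sub_ne_zero.mpr (Ne.symm hz)
  have hab : a * b = 1 - z ^ 2 := by rw [hadef, hbdef]; ring
  have hne : (1 : ℂ) - z ^ 2 ≠ 0 := by rw [← hab]; exact mul_ne_zero ha0 hb0
  have hhalf : (1:ℂ)/2 + 1/2 = 1 := by norm_num
  have hss : s * s = a := by
    rw [hsdef, ← Complex.cpow_add _ _ ha0, hhalf, Complex.cpow_one]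
  have htt : t * t = b := by
    rw [htdef, ← Complex.cpow_add _ _ hb0, hhalf, Complex.cpow_one]
  have huu : u * u = 1 - z ^ 2 := by
    rw [hudef, ← Complex.cpow_add _ _ hne, hhalf, Complex.cpow_one]
  -- argument bounds
  have haarg : |a.arg| < Real.pi / 2 := by
    rw [Complex.abs_arg_lt_pi_div_two_iff]; left; exact hare
  have hbarg_ne : b.arg ≠ Real.pi := by
    intro h
    rw [Complex.arg_eq_pi_iff] at h
    apply hslit
    constructor
    · have := h.2; rw [hbdef] at this; simp at this; linarith [this]
    · have := h.1; rw [hbdef] at this; simp only [Complex.sub_re, Complex.one_re] at this; linarith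
  have hbarg_lt : b.arg < Real.pi := lt_of_le_of_ne (Complex.arg_le_pi b) hbarg_ne
  have hbarg_gt : -Real.pi < b.arg := Complex.neg_pi_lt_arg b
  have hpi : 0 < Real.pi := Real.pi_pos
  have hsum : |a.arg + b.arg| < Real.pi := by
    rw [abs_lt] at haarg ⊢
    rcases lt_trichotomy z.im 0 with him | him | him
    · -- a.im < 0, b.im > 0 : arg a < 0, arg b ≥ 0
      have ha1 : a.arg < 0 := Complex.arg_neg_iff.mpr (by rw [hadef]; simpa using him)
      have hb1 : ¬ b.arg < 0 := by
        rw [Complex.arg_neg_iff]; rw [hbdef]; simp; linarith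
      push_neg at hb1
      constructor <;> linarith [haarg.1, haarg.2]
    · -- real case
      have ha1 : a.arg = 0 := by
        rw [Complex.arg_eq_zero_iff]
        exact ⟨hare.le, by rw [hadef]; simpa using him⟩
      have hb1 : b.arg = 0 := by
        rw [Complex.arg_eq_zero_iff]
        constructor
        · rw [hbdef]; simp only [Complex.sub_re, Complex.one_re]
          by_contra h
          push_neg at h
          exact hslit ⟨him, by linarith⟩
        · rw [hbdef]; simpa using him
      rw [ha1, hb1]; simpa using hpi
    · -- a.im > 0, b.im < 0 : arg a > 0? we only need arg a ≥ 0 version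
      have ha1 : ¬ a.arg < 0 := by
        rw [Complex.arg_neg_iff]; rw [hadef]; simp; linarith
      push_neg at ha1
      have hb1 : b.arg < 0 := Complex.arg_neg_iff.mpr (by rw [hbdef]; simp; linarith)
      constructor <;> linarith [haarg.1, haarg.2]
  -- s * t = u
  have hwre : 0 < (s * t).re := by
    rw [hsdef, htdef]; exact mul_sqrt_re_pos' a b ha0 hb0 hsum
  have hure : 0 ≤ u.re := by rw [hudef]; exact sqrt_re_nonneg' _
  have hww : (s * t) * (s * t) = 1 - z ^ 2 := by
    calc (s * t) * (s * t) = (s * s) * (t * t) := by ring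
      _ = a * b := by rw [hss, htt]
      _ = 1 - z ^ 2 := hab
  have hwu : s * t = u := by
    have hfac : (s * t - u) * (s * t + u) = 0 := by linear_combination hww - huu
    rcases mul_eq_zero.mp hfac with h | h
    · exact sub_eq_zero.mp h
    · exfalso
      have hun : u = -(s * t) := by linear_combination h
      have : u.re = -((s * t).re) := by rw [hun, Complex.neg_re]
      linarith
  have hs0 : s ≠ 0 := fun h => ha0 (by rw [← hss, h, mul_zero])
  have ht0 : t ≠ 0 := fun h => hb0 (by rw [← htt, h, mul_zero])
  have h1u : (1 : ℂ) + u ≠ 0 := by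
    intro h
    have : ((1:ℂ) + u).re = 0 := by rw [h]; simp
    simp only [Complex.add_re, Complex.one_re] at this
    linarith
  have hpeq : pSOR z = s⁻¹ + t := by
    rw [pSOR, hsdef, htdef, hadef, hbdef]
    norm_num [Complex.cpow_neg]
  have hsp : s * pSOR z = 1 + u := by
    rw [hpeq, mul_add, mul_inv_cancel₀ hs0, hwu]
  have hp0 : pSOR z ≠ 0 := by
    intro h
    rw [h, mul_zero] at hsp
    exact h1u hsp.symm
  have hfnum : fSOR z - 1 = (-2) * u / (1 + u) := by
    rw [fSOR, ← hudef]
    field_simp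
    ring
  have hg : 1 - gSOR z = 2 * (2 * b) ^ ((1:ℂ)/2) := by
    rw [gSOR, hbdef]; ring
  have h2b : ‖(2 * b) ^ ((1:ℂ)/2)‖
      = Real.sqrt 2 * ‖t‖ := by
    rw [htdef, Complex.norm_cpow_of_ne_zero (mul_ne_zero two_ne_zero hb0),
      Complex.norm_cpow_of_ne_zero hb0]
    simp only [Complex.div_ofNat_im, Complex.one_im, zero_div, mul_zero, Real.exp_zero,
      div_one, Complex.div_ofNat_re, Complex.one_re, norm_mul, Complex.norm_two,
      Complex.one_im, Complex.one_re]
    rw [Real.mul_rpow (by norm_num) (norm_nonneg b),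
      Real.sqrt_eq_rpow]
  have habsu : ‖u‖ = ‖s‖ * ‖t‖ := by
    rw [← hwu, norm_mul]
  have habs1u : ‖1 + u‖ = ‖s‖ * ‖pSOR z‖ := by
    rw [← hsp, norm_mul]
  have hsa : 0 < ‖s‖ := norm_pos_iff.mpr hs0
  have hta : 0 < ‖t‖ := norm_pos_iff.mpr ht0
  have hpa : 0 < ‖pSOR z‖ := norm_pos_iff.mpr hp0
  have hsqrt2 : (0:ℝ) < Real.sqrt 2 := by positivity
  rw [hfnum, hg, norm_div, norm_mul, norm_mul, h2b, habs1u]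
  have habsn2 : ‖(-2 : ℂ)‖ = 2 := by simp
  rw [habsn2, habsu]
  rw [Complex.norm_two]
  field_simp
end

section
/- Let f(z) = 2/(1+√(1−z²)) − 1 and g(z) = 1 − 2√(2(1−z)) with principal square roots. For every z ∈ ℂ with Re(z) ≥ 0, z ≠ 1, and |z−1| < R, one has c_R |1−g(z)| ≤ |f(z)−1| ≤ |1−g(z)|, where c_R = 1/(√2 (1/√(2−R) + √R)) for 0 ≤ R ≤ 1 and c_R = 1/(√2 (1/√R + √R)) for R > 1. -/
open Complex

noncomputable def cSOR (R : ℝ) : ℝ :=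
  if R ≤ 1 then 1 / (Real.sqrt 2 * (1 / Real.sqrt (2 - R) + Real.sqrt R))
  else 1 / (Real.sqrt 2 * (1 / Real.sqrt R + Real.sqrt R))

lemma absCpowHalf (w : ℂ) : ‖w ^ ((1:ℂ)/2)‖ = Real.sqrt ‖w‖ := by
  have h : ((1:ℂ)/2) = (((1/2 : ℝ)) : ℂ) := by norm_num
  rw [h, Complex.norm_cpow_real, Real.sqrt_eq_rpow]

lemma reCpowHalf (w : ℂ) : 0 ≤ (w ^ ((1:ℂ)/2)).re := by
  have h : ((1:ℂ)/2) = (2⁻¹ : ℂ) := by norm_num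
  rw [h, Complex.cpow_inv_two_re]
  positivity

lemma cSOR_nonneg (R : ℝ) : 0 ≤ cSOR R := by
  unfold cSOR
  split <;> positivity

lemma keySOR (R a b : ℝ) (ha : 0 < a) (haR : a < R) (hb1 : 1 ≤ b) (hab : a ≤ b)
    (hb2 : 2 - a ≤ b) :
    Real.sqrt 2 * cSOR R * (1 + Real.sqrt a * Real.sqrt b) ≤ Real.sqrt b := by
  set p := Real.sqrt a with hp
  set q := Real.sqrt b with hq
  have hp0 : 0 < p := Real.sqrt_pos.2 ha
  have hq1 : 1 ≤ q := by
    rw [hq, show (1:ℝ) = Real.sqrt 1 by simp]; exact Real.sqrt_le_sqrt hb1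
  have hq0 : 0 < q := lt_of_lt_of_le one_pos hq1
  have hpq : p ≤ q := Real.sqrt_le_sqrt hab
  have hs2 : (0:ℝ) < Real.sqrt 2 := by positivity
  unfold cSOR
  by_cases hR1 : R ≤ 1
  · rw [if_pos hR1]
    set m := Real.sqrt (2 - R) with hm
    set r := Real.sqrt R with hr
    have hm0 : 0 < m := Real.sqrt_pos.2 (by linarith)
    have hr0 : 0 ≤ r := Real.sqrt_nonneg _
    have hpr : p ≤ r := Real.sqrt_le_sqrt haR.le
    have hmq : m ≤ q := Real.sqrt_le_sqrt (by linarith)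
    have hK : 0 < 1 / m + r := by positivity
    have hcoef : Real.sqrt 2 * (1 / (Real.sqrt 2 * (1 / m + r))) = 1 / (1 / m + r) := by
      rw [eq_div_iff hK.ne']; field_simp
    rw [hcoef, div_mul_eq_mul_div, div_le_iff₀ hK]
    have h1 : 1 ≤ q / m := (one_le_div hm0).2 hmq
    have h2 : p * q ≤ r * q := mul_le_mul_of_nonneg_right hpr hq0.le
    have hexp : q * (1 / m + r) = q / m + r * q := by ring
    rw [hexp]
    linarith
  · rw [if_neg hR1]
    push_neg at hR1
    set r := Real.sqrt R with hr
    have hr1 : 1 < r := by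
      rw [hr, show (1:ℝ) = Real.sqrt 1 by simp]
      exact Real.sqrt_lt_sqrt zero_le_one hR1
    have hr0 : 0 < r := lt_trans one_pos hr1
    have hpr : p ≤ r := Real.sqrt_le_sqrt haR.le
    have hK : 0 < 1 / r + r := by positivity
    have hcoef : Real.sqrt 2 * (1 / (Real.sqrt 2 * (1 / r + r))) = 1 / (1 / r + r) := by
      rw [eq_div_iff hK.ne']; field_simp
    rw [hcoef, div_mul_eq_mul_div, div_le_iff₀ hK]
    have key : r * (1 + p * q) ≤ q + r ^ 2 * q := by
      rcases le_or_gt p 1 with hp1 | hp1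
      · nlinarith [mul_nonneg (sub_nonneg.2 hq1) (mul_nonneg hr0.le (sub_nonneg.2 hr1.le)),
          sq_nonneg (r - 1), mul_le_mul_of_nonneg_right hp1 hq0.le]
      · nlinarith [mul_nonneg hq0.le
            (mul_nonneg (sub_nonneg.2 hpr) (sub_nonneg.2 (by nlinarith : (1:ℝ) ≤ r * p))),
          mul_nonneg hr0.le (sub_nonneg.2 hpq), mul_pos hp0 hq0]
    have hexp : q * (1 / r + r) = (q + r ^ 2 * q) / r := by field_simp
    rw [hexp, le_div_iff₀ hr0]
    linarith

theorem stmt7 (R : ℝ) (hR : 0 ≤ R) (z : ℂ) (hre : 0 ≤ z.re) (hz : z ≠ 1)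
    (hRz : ‖z - 1‖ < R) :
    cSOR R * ‖1 - gSOR z‖ ≤ ‖fSOR z - 1‖ ∧
    ‖fSOR z - 1‖ ≤ ‖1 - gSOR z‖ := by
  set s := (1 - z ^ 2) ^ ((1 : ℂ) / 2) with hs
  set a := ‖1 - z‖ with hadef
  set b := ‖1 + z‖ with hbdef
  have hsub : ‖z - 1‖ = a := norm_sub_rev z 1
  have ha : 0 < a := by
    rw [hadef]
    exact norm_pos_iff.2 (sub_ne_zero.2 (fun h => hz (by linear_combination -h)))
  have haR : a < R := hsub ▸ hRz
  have hb1 : 1 ≤ b := by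
    have h1 : ((1 : ℂ) + z).re ≤ b := Complex.re_le_norm _
    have h2 : ((1 : ℂ) + z).re = 1 + z.re := by simp
    linarith
  have hb0 : 0 ≤ b := by linarith
  have hab : a ≤ b := by
    rw [hadef, hbdef, Complex.norm_def, Complex.norm_def]
    apply Real.sqrt_le_sqrt
    simp only [Complex.normSq_apply, Complex.sub_re, Complex.sub_im, Complex.add_re,
      Complex.add_im, Complex.one_re, Complex.one_im]
    nlinarith [hre]
  have hb2 : 2 - a ≤ b := by
    have h1 : ‖(1 + z) + (1 - z)‖ ≤ b + a := norm_add_le _ _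
    have h2 : (1 + z) + (1 - z) = (2 : ℂ) := by ring
    rw [h2] at h1
    simp only [Complex.norm_ofNat] at h1
    linarith
  have hb3 : b ≤ 2 + a := by
    have h1 := norm_add_le (2 : ℂ) (-(1 - z))
    rw [show (2 : ℂ) + -(1 - z) = 1 + z by ring, norm_neg, Complex.norm_two] at h1
    linarith
  have habs : ‖s‖ = Real.sqrt a * Real.sqrt b := by
    rw [hs, absCpowHalf, show (1 : ℂ) - z ^ 2 = (1 - z) * (1 + z) by ring, norm_mul,
      Real.sqrt_mul (norm_nonneg _)]
  have hsre : 0 ≤ s.re := reCpowHalf _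
  set A := ‖1 + s‖ with hA
  have hs2 : s.re * s.re + s.im * s.im = a * b := by
    have h1 := Complex.sq_norm s
    rw [habs, Complex.normSq_apply] at h1
    nlinarith [Real.sq_sqrt ha.le, Real.sq_sqrt hb0, Real.sqrt_nonneg a, Real.sqrt_nonneg b]
  have hA2 : 1 + a * b ≤ A ^ 2 := by
    have h1 := Complex.sq_norm (1 + s)
    rw [Complex.normSq_apply] at h1
    simp only [Complex.add_re, Complex.add_im, Complex.one_re, Complex.one_im] at h1
    nlinarith
  have hApos : 0 < A := by
    nlinarith [norm_nonneg (1 + s), mul_nonneg ha.le hb0]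
  have hA1 : A ≤ 1 + Real.sqrt a * Real.sqrt b := by
    calc A ≤ ‖(1:ℂ)‖ + ‖s‖ := norm_add_le _ _
    _ = 1 + Real.sqrt a * Real.sqrt b := by rw [norm_one, habs]
  have hden : (1 : ℂ) + s ≠ 0 := by
    intro h
    rw [hA, h, norm_zero] at hApos
    exact lt_irrefl 0 hApos
  have hf : ‖fSOR z - 1‖ = 2 * (Real.sqrt a * Real.sqrt b) / A := by
    have hfe : fSOR z - 1 = -2 * s / (1 + s) := by
      unfold fSOR
      rw [← hs]
      field_simp
      ring
    rw [hfe, norm_div, norm_mul, habs, hA]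
    norm_num
  have hg : ‖1 - gSOR z‖ = 2 * (Real.sqrt 2 * Real.sqrt a) := by
    have hge : 1 - gSOR z = 2 * (2 * (1 - z)) ^ ((1 : ℂ) / 2) := by
      unfold gSOR; ring
    rw [hge, norm_mul, absCpowHalf, norm_mul]
    simp only [Complex.norm_ofNat, ← hadef]
    rw [Real.sqrt_mul (by norm_num : (0:ℝ) ≤ 2)]
  constructor
  · rw [hf, hg, le_div_iff₀ hApos]
    have hkey := keySOR R a b ha haR hb1 hab hb2
    have hc2 : 0 ≤ cSOR R * Real.sqrt 2 := mul_nonneg (cSOR_nonneg R) (Real.sqrt_nonneg 2)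
    have hcA : cSOR R * Real.sqrt 2 * A ≤ Real.sqrt b := by
      calc cSOR R * Real.sqrt 2 * A ≤ cSOR R * Real.sqrt 2 * (1 + Real.sqrt a * Real.sqrt b) :=
            mul_le_mul_of_nonneg_left hA1 hc2
      _ ≤ Real.sqrt b := by linarith [hkey]
    have h := mul_le_mul_of_nonneg_left hcA (show (0:ℝ) ≤ 2 * Real.sqrt a by positivity)
    calc cSOR R * (2 * (Real.sqrt 2 * Real.sqrt a)) * A
        = 2 * Real.sqrt a * (cSOR R * Real.sqrt 2 * A) := by ring
      _ ≤ 2 * Real.sqrt a * Real.sqrt b := h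
      _ = 2 * (Real.sqrt a * Real.sqrt b) := by ring
  · rw [hf, hg, div_le_iff₀ hApos]
    have hqA : Real.sqrt b ≤ Real.sqrt 2 * A := by
      have h1 : Real.sqrt 2 * A = Real.sqrt (2 * A ^ 2) := by
        rw [Real.sqrt_mul (by norm_num : (0:ℝ) ≤ 2), Real.sqrt_sq hApos.le]
      rw [h1]
      apply Real.sqrt_le_sqrt
      nlinarith [hA2, hb3, mul_nonneg ha.le (show (0:ℝ) ≤ 2 * b - 1 by linarith)]
    have h := mul_le_mul_of_nonneg_left hqA (Real.sqrt_nonneg a)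
    calc 2 * (Real.sqrt a * Real.sqrt b) = 2 * (Real.sqrt a * Real.sqrt b) := rfl
      _ ≤ 2 * (Real.sqrt a * (Real.sqrt 2 * A)) := by linarith [h]
      _ = 2 * (Real.sqrt 2 * Real.sqrt a) * A := by ring
end

section
/- Let f(z) = 2/(1+√(1−z²)) − 1 and g(z) = 1 − 2√(2(1−z)) with principal square roots, and let δ = |Arg(z−1)|. For z ∈ ℂ with Re(z) ≥ 0, z ≠ 1, and |z−1| < R, there exist β_m, β_M ∈ [0, (1/2)arctan|Im(z)|] such that c*_R sin(δ/2 + β_m) |1−g(z)| ≤ 1 − |f(z)| ≤ sin(δ/2 + β_M) |1−g(z)|, where c*_R = c_R/(1+√(R(2+R))) with c_R as in the piecewise formula c_R = 1/(√2(1/√(2−R)+√R)) for R ≤ 1 and 1/(√2(1/√R+√R)) for R > 1. -/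
open Complex

noncomputable def cStarSOR (R : ℝ) : ℝ := cSOR R / (1 + Real.sqrt (R * (2 + R)))

lemma SORaux.abs_half_pow (x : ℂ) :
    ‖x ^ ((1:ℂ)/2)‖ = Real.sqrt ‖x‖ := by
  rw [show ((1:ℂ)/2) = (((1/2:ℝ)):ℂ) by norm_num, Complex.norm_cpow_real, Real.sqrt_eq_rpow]

lemma SORaux.re_half_pow (x : ℂ) :
    (x ^ ((1:ℂ)/2)).re = Real.sqrt ‖x‖ * Real.cos (x.arg / 2) := by
  rw [show ((1:ℂ)/2) = (((1/2:ℝ)):ℂ) by norm_num, Complex.cpow_ofReal_re, Real.sqrt_eq_rpow,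
    mul_one_div]

lemma SORaux.arg_cos_key (z : ℂ) (hre : 0 ≤ z.re) (hz : z ≠ 1) :
    Real.cos ((1 - z^2).arg / 2)
      = Real.sin (|(z-1).arg| / 2 + |(1+z).arg| / 2) := by
  have h1 : (1:ℂ) - z ≠ 0 := sub_ne_zero.mpr (Ne.symm hz)
  have hre1 : (0:ℝ) < (1+z).re := by simp only [Complex.add_re, Complex.one_re]; linarith
  have h2 : (1:ℂ) + z ≠ 0 := fun h => by rw [h] at hre1; simp at hre1
  have hfac : (1 - z^2 : ℂ) = (1-z) * (1+z) := by ring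
  have hv2 : |(1+z).arg| < Real.pi/2 := Complex.abs_arg_lt_pi_div_two_iff.2 (Or.inl hre1)
  have him1 : (1+z).im = z.im := by simp
  have him2 : (z-1).im = z.im := by simp
  rcases lt_trichotomy z.im 0 with him | him | him
  · have hd : (z-1).arg < 0 := Complex.arg_neg_iff.2 (by rw [him2]; exact him)
    have hv : (1+z).arg < 0 := Complex.arg_neg_iff.2 (by rw [him1]; exact him)
    have hu : (1-z).arg = (z-1).arg + Real.pi := by
      rw [show (1:ℂ) - z = -(z-1) by ring]
      exact Complex.arg_neg_eq_arg_add_pi_of_im_neg (by rw [him2]; exact him)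
    have hdlb : -Real.pi < (z-1).arg := Complex.neg_pi_lt_arg _
    have hmem : (1-z).arg + (1+z).arg ∈ Set.Ioc (-Real.pi) Real.pi := by
      constructor
      · rw [hu]; have := abs_lt.1 hv2; linarith
      · rw [hu]; linarith
    rw [hfac, Complex.arg_mul h1 h2 hmem, hu, abs_of_neg hd, abs_of_neg hv,
      show ((z-1).arg + Real.pi + (1+z).arg)/2
        = Real.pi/2 - (-(z-1).arg/2 + -(1+z).arg/2) by ring,
      Real.cos_pi_div_two_sub]
  · rcases lt_or_gt_of_ne (show z.re ≠ 1 from fun h => hz (Complex.ext h him)) with hlt | hgt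
    · have hu : (1-z).arg = 0 := Complex.arg_eq_zero_iff.2
        ⟨by simp only [Complex.sub_re, Complex.one_re]; linarith, by simp [him]⟩
      have hv : (1+z).arg = 0 := Complex.arg_eq_zero_iff.2 ⟨hre1.le, by simp [him]⟩
      have hd : (z-1).arg = Real.pi := Complex.arg_eq_pi_iff.2
        ⟨by simp only [Complex.sub_re, Complex.one_re]; linarith, by simp [him]⟩
      have hmem : (1-z).arg + (1+z).arg ∈ Set.Ioc (-Real.pi) Real.pi := by
        rw [hu, hv]; constructor <;> simp [Real.pi_pos, Real.pi_pos.le]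
      rw [hfac, Complex.arg_mul h1 h2 hmem, hu, hv, hd, abs_of_pos Real.pi_pos]
      norm_num
    · have hu : (1-z).arg = Real.pi := Complex.arg_eq_pi_iff.2
        ⟨by simp only [Complex.sub_re, Complex.one_re]; linarith, by simp [him]⟩
      have hv : (1+z).arg = 0 := Complex.arg_eq_zero_iff.2 ⟨hre1.le, by simp [him]⟩
      have hd : (z-1).arg = 0 := Complex.arg_eq_zero_iff.2
        ⟨by simp only [Complex.sub_re, Complex.one_re]; linarith, by simp [him]⟩
      have hmem : (1-z).arg + (1+z).arg ∈ Set.Ioc (-Real.pi) Real.pi := by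
        rw [hu, hv]; constructor
        · linarith [Real.pi_pos]
        · simp
      rw [hfac, Complex.arg_mul h1 h2 hmem, hu, hv, hd]
      simp
  · have hd0 : 0 ≤ (z-1).arg := Complex.arg_nonneg_iff.2 (by rw [him2]; exact him.le)
    have hdne : (z-1).arg ≠ 0 := fun h => by
      have := (Complex.arg_eq_zero_iff.1 h).2; rw [him2] at this; exact him.ne' this
    have hdpos : 0 < (z-1).arg := lt_of_le_of_ne hd0 (Ne.symm hdne)
    have hv0 : 0 ≤ (1+z).arg := Complex.arg_nonneg_iff.2 (by rw [him1]; exact him.le)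
    have hdle : (z-1).arg ≤ Real.pi := Complex.arg_le_pi _
    have hu : (1-z).arg = (z-1).arg - Real.pi := by
      rw [show (1:ℂ) - z = -(z-1) by ring]
      exact Complex.arg_neg_eq_arg_sub_pi_of_im_pos (by rw [him2]; exact him)
    have hmem : (1-z).arg + (1+z).arg ∈ Set.Ioc (-Real.pi) Real.pi := by
      constructor
      · rw [hu]; linarith
      · rw [hu]; have := abs_lt.1 hv2; linarith
    rw [hfac, Complex.arg_mul h1 h2 hmem, hu, _root_.abs_of_nonneg hd0,
      _root_.abs_of_nonneg hv0,
      show ((z-1).arg - Real.pi + (1+z).arg)/2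
        = -(Real.pi/2 - ((z-1).arg/2 + (1+z).arg/2)) by ring,
      Real.cos_neg, Real.cos_pi_div_two_sub]

lemma SORaux.beta_le (z : ℂ) (hre : 0 ≤ z.re) : |(1+z).arg| ≤ Real.arctan |z.im| := by
  have hre1 : (0:ℝ) < (1+z).re := by simp only [Complex.add_re, Complex.one_re]; linarith
  have him1 : (1+z).im = z.im := by simp
  have htan : Real.tan ((1+z).arg) = z.im / (1 + z.re) := by
    rw [Complex.tan_arg, him1]; simp
  have hlt : |(1+z).arg| < Real.pi/2 := Complex.abs_arg_lt_pi_div_two_iff.2 (Or.inl hre1)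
  have habs := abs_lt.1 hlt
  have harg : (1+z).arg = Real.arctan (z.im / (1 + z.re)) := by
    rw [← htan, Real.arctan_tan habs.1 habs.2]
  rw [harg]
  have hq : |z.im / (1 + z.re)| ≤ |z.im| := by
    rw [abs_div, _root_.abs_of_pos (show (0:ℝ) < 1 + z.re by linarith)]
    exact div_le_self (abs_nonneg _) (by linarith)
  have habs2 : |Real.arctan (z.im / (1 + z.re))| = Real.arctan |z.im / (1 + z.re)| := by
    rcases abs_cases (z.im / (1 + z.re)) with ⟨h1, h2⟩ | ⟨h1, h2⟩
    · rw [h1, _root_.abs_of_nonneg]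
      rw [← Real.arctan_zero]
      exact Real.arctan_strictMono.monotone h2
    · rw [h1, Real.arctan_neg, _root_.abs_of_nonpos]
      rw [← Real.arctan_zero]
      exact Real.arctan_strictMono.monotone h2.le
  rw [habs2]
  exact Real.arctan_strictMono.monotone hq

lemma SORaux.cSOR_pos (R : ℝ) (hR : 0 < R) : 0 < cSOR R := by
  rw [cSOR]; split_ifs with h
  · have h1 : 0 < Real.sqrt (2-R) := Real.sqrt_pos.2 (by linarith)
    have h2 : 0 < Real.sqrt R := Real.sqrt_pos.2 hR
    positivity
  · have h2 : 0 < Real.sqrt R := Real.sqrt_pos.2 hR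
    positivity

lemma SORaux.cSOR_sq (R : ℝ) (hR : 0 < R) (a t : ℝ) (ha : 0 < a) (haR : a < R)
    (ht1 : 1 ≤ t) (ht3 : 2 - a ≤ t) :
    2 * (1 + a*t) * (cSOR R)^2 ≤ t := by
  have ht0 : 0 < t := by linarith
  have hs2 : (Real.sqrt 2)^2 = 2 := Real.sq_sqrt (by norm_num)
  have hs20 : 0 < Real.sqrt 2 := Real.sqrt_pos.2 (by norm_num)
  rw [cSOR]; split_ifs with h
  · set p := Real.sqrt (2-R) with hp
    set q := Real.sqrt R with hq
    have hp2 : p^2 = 2-R := Real.sq_sqrt (by linarith)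
    have hq2 : q^2 = R := Real.sq_sqrt hR.le
    have hp0 : 0 < p := Real.sqrt_pos.2 (by linarith)
    have hq0 : 0 < q := Real.sqrt_pos.2 hR
    have hM : 0 < 1/p + q := by positivity
    have hc2 : (1/(Real.sqrt 2*(1/p+q)))^2 = 1/(2*(1/p+q)^2) := by
      rw [div_pow, mul_pow, hs2]; norm_num
    rw [hc2]
    rw [show 2*(1+a*t)*(1/(2*(1/p+q)^2)) = (1+a*t)/((1/p+q)^2) by field_simp]
    rw [div_le_iff₀ (by positivity)]
    have hexp : (1/p+q)^2 = 1/(2-R) + 2*(q/p) + R := by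
      rw [← hp2, ← hq2]; field_simp; ring
    have h1 : 2 - R ≤ t := by linarith
    have h2R : (0:ℝ) < 2 - R := by linarith
    have hdiv : (1:ℝ) ≤ t/(2-R) := (one_le_div h2R).2 h1
    have hqp : 0 ≤ q/p := by positivity
    rw [hexp]
    have hat : a*t ≤ R*t := by nlinarith
    have hdiv' : 1 ≤ t * (1/(2-R)) := by rw [mul_one_div]; exact hdiv
    nlinarith [mul_nonneg hqp ht0.le, hdiv', hat]
  · push_neg at h
    set q := Real.sqrt R with hq
    have hq2 : q^2 = R := Real.sq_sqrt hR.le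
    have hq0 : 0 < q := Real.sqrt_pos.2 hR
    have hc2 : (1/(Real.sqrt 2*(1/q+q)))^2 = 1/(2*(1/q+q)^2) := by
      rw [div_pow, mul_pow, hs2]; norm_num
    rw [hc2]
    rw [show 2*(1+a*t)*(1/(2*(1/q+q)^2)) = (1+a*t)/((1/q+q)^2) by field_simp]
    rw [div_le_iff₀ (by positivity)]
    have hexp : (1/q+q)^2 = 1/R + 2 + R := by
      rw [← hq2]; field_simp; ring
    rw [hexp]
    have hRinv : 0 < 1/R := by positivity
    have hat : a*t ≤ R*t := by nlinarith
    nlinarith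

set_option maxHeartbeats 1000000 in
theorem stmt15 (R : ℝ) (z : ℂ) (hre : 0 ≤ z.re) (hz : z ≠ 1)
    (hRz : ‖z - 1‖ < R) :
    ∃ βm βM : ℝ,
      βm ∈ Set.Icc 0 (Real.arctan |z.im| / 2) ∧
      βM ∈ Set.Icc 0 (Real.arctan |z.im| / 2) ∧
      cStarSOR R * Real.sin (|Complex.arg (z - 1)| / 2 + βm) * ‖1 - gSOR z‖
        ≤ 1 - ‖fSOR z‖ ∧
      1 - ‖fSOR z‖
        ≤ Real.sin (|Complex.arg (z - 1)| / 2 + βM) * ‖1 - gSOR z‖ := by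
  have ha0 : (z - 1 : ℂ) ≠ 0 := sub_ne_zero.mpr hz
  set a := ‖z-1‖ with ha_def
  have ha : 0 < a := norm_pos_iff.mpr ha0
  have haR : a < R := hRz
  have hR : 0 < R := ha.trans haR
  set t := ‖1+z‖ with ht_def
  have ht1 : (1:ℝ) ≤ t := by
    have h := Complex.re_le_norm (1+z)
    simp only [Complex.add_re, Complex.one_re] at h
    rw [← ht_def] at h
    linarith only [h, hre]
  have ht2 : t ≤ 2 + a := by
    have h := norm_add_le (2:ℂ) (z-1)
    rw [show (2:ℂ) + (z-1) = 1 + z by ring, ← ht_def, Complex.norm_two, ← ha_def] at h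
    exact h
  have habs1z : ‖1-z‖ = a := by
    rw [show (1-z:ℂ) = -(z-1) by ring, norm_neg]
  have ht3 : 2 - a ≤ t := by
    have h := norm_add_le (1+z) (1-z)
    rw [show (1+z) + (1-z) = (2:ℂ) by ring, Complex.norm_two, ← ht_def, habs1z] at h
    linarith only [h]
  have ht0 : (0:ℝ) < t := by linarith only [ht1]
  have hat0 : (0:ℝ) ≤ a*t := by positivity
  have hβmem : |(1+z).arg|/2 ∈ Set.Icc 0 (Real.arctan |z.im| / 2) := by
    constructor
    · positivity
    · have h := SORaux.beta_le z hre
      linarith only [h]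
  set s := Real.sin (|(z-1).arg| / 2 + |(1+z).arg| / 2) with hs_def
  set w := (1 - z^2) ^ ((1:ℂ)/2) with hw
  have habsx : ‖1 - z^2‖ = a * t := by
    rw [show (1 - z^2 : ℂ) = (1-z)*(1+z) by ring, norm_mul, habs1z, ← ht_def]
  have hcos : Real.cos ((1 - z^2).arg / 2) = s := SORaux.arg_cos_key z hre hz
  have hwabs : ‖w‖ = Real.sqrt (a*t) := by
    rw [hw, SORaux.abs_half_pow, habsx]
  have hwre : w.re = Real.sqrt (a*t) * s := by
    rw [hw, SORaux.re_half_pow, habsx, hcos]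
  have hs0 : 0 ≤ s := by
    rw [← hcos]
    apply Real.cos_nonneg_of_mem_Icc
    constructor
    · linarith only [Complex.neg_pi_lt_arg (1 - z^2)]
    · linarith only [Complex.arg_le_pi (1 - z^2)]
  have hwre0 : 0 ≤ w.re := by rw [hwre]; positivity
  set B := ‖1 + w‖ with hB
  set C := ‖1 - w‖ with hC
  have hBn : 0 ≤ B := norm_nonneg _
  have hCn : 0 ≤ C := norm_nonneg _
  have hnormw : w.re^2 + w.im^2 = a*t := by
    have h := Complex.sq_norm w
    rw [hwabs, Real.sq_sqrt hat0] at h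
    rw [h, Complex.normSq_apply]; ring
  have hB2 : B^2 = 1 + 2*w.re + a*t := by
    rw [hB, Complex.sq_norm, Complex.normSq_apply]
    simp only [Complex.add_re, Complex.add_im, Complex.one_re, Complex.one_im]
    linear_combination hnormw
  have hC2 : C^2 = 1 - 2*w.re + a*t := by
    rw [hC, Complex.sq_norm, Complex.normSq_apply]
    simp only [Complex.sub_re, Complex.sub_im, Complex.one_re, Complex.one_im]
    linear_combination hnormw
  have hB1 : 1 ≤ B := by
    have h := Complex.re_le_norm (1+w)
    simp only [Complex.add_re, Complex.one_re] at h
    rw [← hB] at h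
    linarith only [h, hwre0]
  have hBC2 : 2 ≤ B + C := by
    have h := norm_add_le (1+w) (1-w)
    rw [show (1+w) + (1-w) = (2:ℂ) by ring, Complex.norm_two, ← hB, ← hC] at h
    linarith only [h]
  have hD : 0 < B*(B+C) :=
    mul_pos (by linarith only [hB1]) (by linarith only [hBC2])
  have h1w : (1:ℂ) + w ≠ 0 := by
    intro h
    rw [hB, h, norm_zero] at hB1
    linarith only [hB1]
  have hfeq : fSOR z = (1 - w)/(1 + w) := by
    rw [fSOR, ← hw]
    field_simp
    ring
  have h1f : 1 - ‖fSOR z‖ = 4*w.re / (B*(B+C)) := by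
    rw [hfeq, norm_div, ← hB, ← hC]
    have hB0 : (0:ℝ) < B := by linarith only [hB1]
    have hBC : B^2 - C^2 = 4*w.re := by linarith only [hB2, hC2]
    rw [show (1:ℝ) - C/B = (B-C)/B by rw [sub_div, div_self (ne_of_gt hB0)],
      div_eq_div_iff (ne_of_gt hB0) (ne_of_gt hD)]
    linear_combination B*hBC
  have habsg : ‖1 - gSOR z‖ = 2 * Real.sqrt (2*a) := by
    rw [gSOR, show (1 : ℂ) - (1 - 2*(2*(1-z))^((1:ℂ)/2)) = 2*(2*(1-z))^((1:ℂ)/2) by ring,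
      norm_mul, Complex.norm_two, SORaux.abs_half_pow, norm_mul, Complex.norm_two, habs1z]
  have hsa : Real.sqrt (a*t) = Real.sqrt a * Real.sqrt t := Real.sqrt_mul ha.le t
  have hs2a : Real.sqrt (2*a) = Real.sqrt 2 * Real.sqrt a := Real.sqrt_mul (by norm_num) a
  have hsqrt4 : Real.sqrt 4 = 2 := by
    rw [show (4:ℝ) = 2^2 by norm_num, Real.sqrt_sq (by norm_num)]
  have h4 : Real.sqrt (4 * (1+a*t)) = 2 * Real.sqrt (1+a*t) := by
    rw [Real.sqrt_mul (by norm_num), hsqrt4]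
  have hkey1 : Real.sqrt 2 * Real.sqrt t ≤ 2 * Real.sqrt (1 + a*t) := by
    rw [← Real.sqrt_mul (by norm_num), ← h4]
    apply Real.sqrt_le_sqrt
    nlinarith only [mul_le_mul_of_nonneg_left ht1 ha.le, ht2, ha, ht1]
  have hBlb : Real.sqrt (1 + a*t) ≤ B := by
    have h1 : Real.sqrt (1+a*t) ≤ Real.sqrt (B^2) :=
      Real.sqrt_le_sqrt (by linarith only [hB2, hwre0])
    rwa [Real.sqrt_sq hBn] at h1
  have hsn : 0 ≤ Real.sqrt (1+a*t) := Real.sqrt_nonneg _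
  have hDlb : Real.sqrt 2 * Real.sqrt t ≤ B*(B+C) := by
    have h1 : Real.sqrt (1+a*t) * 2 ≤ B*(B+C) := mul_le_mul hBlb hBC2 (by norm_num) hBn
    linarith only [h1, hkey1]
  have hupper : 1 - ‖fSOR z‖
      ≤ Real.sin (|(z-1).arg| / 2 + |(1+z).arg| / 2) * ‖1 - gSOR z‖ := by
    rw [← hs_def, h1f, habsg, hs2a, hwre, hsa, div_le_iff₀ hD]
    have hmul2 : Real.sqrt 2 * Real.sqrt 2 = 2 := Real.mul_self_sqrt (by norm_num)
    have h2t : 2 * Real.sqrt t ≤ Real.sqrt 2 * (B*(B+C)) := by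
      calc 2 * Real.sqrt t = Real.sqrt 2 * (Real.sqrt 2 * Real.sqrt t) := by
            rw [← mul_assoc, hmul2]
        _ ≤ Real.sqrt 2 * (B*(B+C)) :=
            mul_le_mul_of_nonneg_left hDlb (Real.sqrt_nonneg 2)
    have hcoef : (0:ℝ) ≤ 2*s*Real.sqrt a := by positivity
    calc 4*(Real.sqrt a*Real.sqrt t*s) = (2*s*Real.sqrt a) * (2*Real.sqrt t) := by ring
      _ ≤ (2*s*Real.sqrt a) * (Real.sqrt 2 * (B*(B+C))) :=
          mul_le_mul_of_nonneg_left h2t hcoef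
      _ = s * (2*(Real.sqrt 2*Real.sqrt a)) * (B*(B+C)) := by ring
  have hcpos : 0 < cSOR R := SORaux.cSOR_pos R hR
  have hden : (0:ℝ) < 1 + Real.sqrt (R*(2+R)) := by positivity
  have hmle : Real.sqrt (a*t) ≤ Real.sqrt (R*(2+R)) := by
    apply Real.sqrt_le_sqrt
    nlinarith only [mul_le_mul_of_nonneg_left ht2 ha.le,
      mul_le_mul_of_nonneg_right haR.le (show (0:ℝ) ≤ 2+a by linarith only [ha]),
      mul_le_mul_of_nonneg_left (show 2+a ≤ 2+R by linarith only [haR]) hR.le]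
  have hstar2 : cStarSOR R * (1 + Real.sqrt (a*t)) ≤ cSOR R := by
    rw [cStarSOR, div_mul_eq_mul_div, div_le_iff₀ hden]
    apply mul_le_mul_of_nonneg_left (by linarith only [hmle]) hcpos.le
  have hBub : B ≤ 1 + Real.sqrt (a*t) := by
    have h := norm_add_le (1:ℂ) w
    rw [norm_one, hwabs, ← hB] at h
    exact h
  have hBCub : B + C ≤ 2*Real.sqrt (1+a*t) := by
    have h1 : (B+C)^2 ≤ (2*Real.sqrt (1+a*t))^2 := by
      rw [mul_pow, Real.sq_sqrt (by positivity)]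
      nlinarith only [sq_nonneg (B-C), hB2, hC2]
    have h2 := Real.sqrt_le_sqrt h1
    rwa [Real.sqrt_sq (by linarith only [hBn, hCn]), Real.sqrt_sq (by positivity)] at h2
  have hDub : B*(B+C) ≤ (1 + Real.sqrt (a*t)) * (2 * Real.sqrt (1+a*t)) := by
    apply mul_le_mul hBub hBCub (by linarith only [hBn, hCn]) (by positivity)
  have hstar0 : 0 ≤ cStarSOR R := by
    rw [cStarSOR]
    exact le_of_lt (div_pos hcpos hden)
  have hfin : Real.sqrt 2 * Real.sqrt (1+a*t) * cSOR R ≤ Real.sqrt t := by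
    have h1 := SORaux.cSOR_sq R hR a t ha haR ht1 ht3
    have h2 : Real.sqrt (2*(1+a*t)*(cSOR R)^2)
        = Real.sqrt 2 * Real.sqrt (1+a*t) * cSOR R := by
      rw [Real.sqrt_mul (by positivity), Real.sqrt_mul (by norm_num), Real.sqrt_sq hcpos.le]
    calc Real.sqrt 2 * Real.sqrt (1+a*t) * cSOR R
        = Real.sqrt (2*(1+a*t)*(cSOR R)^2) := h2.symm
      _ ≤ Real.sqrt t := Real.sqrt_le_sqrt h1
  have hmain : cStarSOR R * Real.sqrt 2 * (B*(B+C)) ≤ 2 * Real.sqrt t := by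
    calc cStarSOR R * Real.sqrt 2 * (B*(B+C))
        ≤ cStarSOR R * Real.sqrt 2 * ((1 + Real.sqrt (a*t)) * (2 * Real.sqrt (1+a*t))) := by
          apply mul_le_mul_of_nonneg_left hDub (by positivity)
      _ = (cStarSOR R * (1 + Real.sqrt (a*t))) * (2 * (Real.sqrt 2 * Real.sqrt (1+a*t))) := by
          ring
      _ ≤ cSOR R * (2 * (Real.sqrt 2 * Real.sqrt (1+a*t))) := by
          apply mul_le_mul_of_nonneg_right hstar2 (by positivity)
      _ = 2 * (Real.sqrt 2 * Real.sqrt (1+a*t) * cSOR R) := by ring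
      _ ≤ 2 * Real.sqrt t := by linarith only [hfin]
  have hlower : cStarSOR R * Real.sin (|(z-1).arg| / 2 + |(1+z).arg| / 2)
      * ‖1 - gSOR z‖ ≤ 1 - ‖fSOR z‖ := by
    rw [← hs_def, h1f, habsg, hs2a, hwre, hsa, le_div_iff₀ hD]
    have hcoef : (0:ℝ) ≤ 2*s*Real.sqrt a := by positivity
    calc cStarSOR R * s * (2*(Real.sqrt 2*Real.sqrt a)) * (B*(B+C))
        = (2*s*Real.sqrt a) * (cStarSOR R * Real.sqrt 2 * (B*(B+C))) := by ring
      _ ≤ (2*s*Real.sqrt a) * (2*Real.sqrt t) := mul_le_mul_of_nonneg_left hmain hcoef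
      _ = 4*(Real.sqrt a*Real.sqrt t*s) := by ring
  exact ⟨|(1+z).arg|/2, |(1+z).arg|/2, hβmem, hβmem, hlower, hupper⟩
end

section
/- Let f(z) = 2/(1+√(1−z²)) − 1 with the principal square root. Then |f(z)| < 1 for every z with Re(z) ≥ 0 and z ∉ [1, ∞), and |f(z)| = 1 for every z ∈ [1, ∞). -/
open Complex

lemma sqrt_re_formula (x : ℂ) (hx : x ≠ 0) :
    (x ^ ((1:ℂ)/2)).re = Real.exp ((Complex.log x).re * (1/2)) * Real.cos (Complex.arg x / 2) := by
  rw [Complex.cpow_def_of_ne_zero hx, Complex.exp_re]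
  have h1 : (Complex.log x * (1/2)).re = (Complex.log x).re * (1/2) := by
    simp [Complex.mul_re]
  have h2 : (Complex.log x * (1/2)).im = Complex.arg x / 2 := by
    simp [Complex.mul_im, Complex.log_im]
    ring
  rw [h1, h2]

lemma sqrt_re_pos (x : ℂ) (hx : x ≠ 0) (ha : Complex.arg x ≠ Real.pi) :
    0 < (x ^ ((1:ℂ)/2)).re := by
  rw [sqrt_re_formula x hx]
  apply mul_pos (Real.exp_pos _)
  apply Real.cos_pos_of_mem_Ioo
  constructor
  · have := Complex.neg_pi_lt_arg x
    linarith
  · have h1 := Complex.arg_le_pi x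
    have h2 : Complex.arg x < Real.pi := lt_of_le_of_ne h1 ha
    linarith

lemma sqrt_re_zero (x : ℂ) (ha : Complex.arg x = Real.pi) :
    (x ^ ((1:ℂ)/2)).re = 0 := by
  have hx : x ≠ 0 := by
    intro h
    rw [h, Complex.arg_zero] at ha
    exact Real.pi_ne_zero ha.symm
  rw [sqrt_re_formula x hx, ha, Real.cos_pi_div_two, mul_zero]

lemma fSOR_eq (z : ℂ) (h : 1 + (1 - z ^ 2) ^ ((1:ℂ)/2) ≠ 0) :
    fSOR z = (1 - (1 - z ^ 2) ^ ((1:ℂ)/2)) / (1 + (1 - z ^ 2) ^ ((1:ℂ)/2)) := by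
  unfold fSOR
  field_simp
  ring

theorem stmt16 :
    (∀ z : ℂ, 0 ≤ z.re → ¬ (z.im = 0 ∧ 1 ≤ z.re) → ‖fSOR z‖ < 1) ∧
    (∀ x : ℝ, 1 ≤ x → ‖fSOR (x : ℂ)‖ = 1) := by
  constructor
  · intro z hre hslit
    set x : ℂ := 1 - z ^ 2 with hxdef
    set w : ℂ := x ^ ((1:ℂ)/2) with hwdef
    have him : x.im = -(2 * z.re * z.im) := by
      simp [hxdef, pow_two, Complex.mul_im]
      ring
    have hxre : x.re = 1 - z.re ^ 2 + z.im ^ 2 := by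
      simp [hxdef, pow_two, Complex.mul_re]
      ring
    have hkey : ¬ (x.im = 0 ∧ x.re ≤ 0) := by
      rintro ⟨h1, h2⟩
      rw [him] at h1
      rw [hxre] at h2
      rcases mul_eq_zero.mp (by linarith [h1] : (2 * z.re) * z.im = 0) with h | h
      · have : z.re = 0 := by linarith
        rw [this] at h2
        nlinarith
      · apply hslit
        refine ⟨h, ?_⟩
        rw [h] at h2
        nlinarith
    have hx0 : x ≠ 0 := by
      intro h
      exact hkey ⟨by rw [h]; simp, by rw [h]; simp⟩
    have harg : Complex.arg x ≠ Real.pi := by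
      intro h
      rw [Complex.arg_eq_pi_iff] at h
      exact hkey ⟨h.2, le_of_lt h.1⟩
    have hwre : 0 < w.re := sqrt_re_pos x hx0 harg
    have hden : (1 : ℂ) + w ≠ 0 := by
      intro h
      have : ((1 : ℂ) + w).re = 0 := by rw [h]; simp
      simp [Complex.add_re] at this
      linarith
    rw [fSOR_eq z hden, norm_div, div_lt_one (norm_pos_iff.mpr hden)]
    have h2 : (‖1 - w‖) ^ 2 < (‖1 + w‖) ^ 2 := by
      rw [Complex.sq_norm, Complex.sq_norm, Complex.normSq_apply, Complex.normSq_apply]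
      simp [Complex.add_re, Complex.add_im, Complex.sub_re, Complex.sub_im]
      nlinarith
    exact lt_of_pow_lt_pow_left₀ 2 (norm_nonneg _) h2
  · intro t ht
    set x : ℂ := 1 - (t : ℂ) ^ 2 with hxdef
    set w : ℂ := x ^ ((1:ℂ)/2) with hwdef
    rcases eq_or_lt_of_le ht with h1 | h1
    · have hx : x = 0 := by
        rw [hxdef, ← h1]
        norm_num
      have hw : w = 0 := by
        rw [hwdef, hx, Complex.zero_cpow (by norm_num : (1:ℂ)/2 ≠ 0)]
      unfold fSOR
      rw [← hxdef, ← hwdef, hw]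
      norm_num
    · have hxr : x = ((1 - t ^ 2 : ℝ) : ℂ) := by push_cast [hxdef]; ring
      have hneg : (1 - t ^ 2 : ℝ) < 0 := by nlinarith
      have harg : Complex.arg x = Real.pi := by
        rw [hxr]; exact Complex.arg_ofReal_of_neg hneg
      have hwre : w.re = 0 := sqrt_re_zero x harg
      have hden : (1 : ℂ) + w ≠ 0 := by
        intro h
        have : ((1 : ℂ) + w).re = 0 := by rw [h]; simp
        simp [Complex.add_re] at this
        linarith
      have heq : fSOR (t : ℂ) = (1 - w) / (1 + w) := by
        have := fSOR_eq (t : ℂ) (by rw [← hxdef, ← hwdef]; exact hden)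
        rw [this, ← hxdef, ← hwdef]
      rw [heq, norm_div]
      have habs : ‖1 - w‖ = ‖1 + w‖ := by
        rw [Complex.norm_def, Complex.norm_def]
        congr 1
        rw [Complex.normSq_apply, Complex.normSq_apply]
        simp [Complex.add_re, Complex.add_im, Complex.sub_re, Complex.sub_im, hwre]
      rw [habs]
      exact div_self (by simpa using norm_ne_zero_iff.mpr hden)
end

section
/- Let f(z) = 2/(1+√(1−z²)) − 1 with the principal square root. Then, as z → 1 with Re(z) ≥ 0 and z ∉ [1, ∞), one has −log|f(z)| ∼ 2√2 sin(|Arg(z−1)|/2) √|1−z|, i.e. the ratio of the two sides tends to 1 along any such sequence z_n → 1 for which the ratio is defined. -/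
open Complex Filter

/- ### Auxiliary lemmas about the principal square root -/

lemma sq_re_eq {ζ : ℂ} (hζ : ζ ≠ 0) :
    (ζ ^ ((1:ℂ)/2)).re = Real.sqrt (‖ζ‖) * Real.cos (Complex.arg ζ / 2) := by
  rw [cpow_def_of_ne_zero hζ, Complex.exp_re]
  have h1 : (Complex.log ζ * (1/2)).re = Real.log (‖ζ‖) / 2 := by
    simp [Complex.log_re, Complex.mul_re, Complex.log_im]; ring
  have h2 : (Complex.log ζ * (1/2)).im = Complex.arg ζ / 2 := by
    simp [Complex.mul_im, Complex.log_im, Complex.log_re]; ring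
  rw [h1, h2]
  congr 1
  rw [Real.sqrt_eq_rpow, Real.rpow_def_of_pos (norm_pos_iff.mpr hζ)]
  ring_nf

lemma sq_sq {ζ : ℂ} (hζ : ζ ≠ 0) : (ζ ^ ((1:ℂ)/2)) ^ 2 = ζ := by
  rw [sq, ← Complex.cpow_add _ _ hζ]; norm_num

lemma sq_mul {x y : ℂ} (hx : x ≠ 0) (hy : y ≠ 0)
    (h : Complex.arg x + Complex.arg y ∈ Set.Ioc (-Real.pi) Real.pi) :
    (x * y) ^ ((1:ℂ)/2) = x ^ ((1:ℂ)/2) * y ^ ((1:ℂ)/2) := by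
  rw [cpow_def_of_ne_zero (mul_ne_zero hx hy), cpow_def_of_ne_zero hx, cpow_def_of_ne_zero hy,
    Complex.log_mul hx hy h, add_mul, Complex.exp_add]

lemma sq_re_pos {ζ : ℂ} (hζ : ζ ≠ 0) (harg : Complex.arg ζ ≠ Real.pi) :
    0 < (ζ ^ ((1:ℂ)/2)).re := by
  rw [sq_re_eq hζ]
  have h1 := Complex.neg_pi_lt_arg ζ
  have h2 := (Complex.arg_le_pi ζ).lt_of_ne harg
  have hpi := Real.pi_pos
  apply mul_pos (Real.sqrt_pos.2 (norm_pos_iff.mpr hζ))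
  apply Real.cos_pos_of_mem_Ioo
  constructor <;> [linarith; linarith]

lemma abs_sq_eq (ζ : ℂ) : ‖ζ ^ ((1:ℂ)/2)‖ = Real.sqrt (‖ζ‖) := by
  by_cases hζ : ζ = 0
  · rw [hζ, Complex.zero_cpow (by norm_num)]; simp
  · have h : ‖ζ ^ ((1:ℂ)/2)‖ ^ 2 = ‖ζ‖ := by
      rw [← norm_pow, sq_sq hζ]
    rw [← h, Real.sqrt_sq (norm_nonneg _)]

lemma tendsto_sq_one : Tendsto (fun ζ : ℂ => ζ ^ ((1:ℂ)/2)) (nhds 1) (nhds 1) := by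
  have h := continuousAt_cpow_const (a := (1:ℂ)) (b := 1/2) (by
    simp [Complex.mem_slitPlane_iff])
  have := h.tendsto
  rwa [Complex.one_cpow] at this

lemma log_bounds {x : ℝ} (hx0 : 0 < x) (hx1 : x < 1) :
    x*(2+x)/(1+x) ≤ Real.log (1+x) - Real.log (1-x) ∧
    Real.log (1+x) - Real.log (1-x) ≤ 2*x/(1-x) := by
  have h1 : (0:ℝ) < 1 + x := by linarith
  have h2 : (0:ℝ) < 1 - x := by linarith
  constructor
  · have hu : Real.log (1-x) ≤ -x := by
      have := Real.log_le_sub_one_of_pos h2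
      linarith
    have hl : 1 - 1/(1+x) ≤ Real.log (1+x) := by
      have := Real.log_le_sub_one_of_pos (show (0:ℝ) < (1+x)⁻¹ by positivity)
      rw [Real.log_inv] at this
      have : 1 - (1+x)⁻¹ ≤ Real.log (1+x) := by linarith
      simpa [one_div] using this
    have key : x*(2+x)/(1+x) = (1 - 1/(1+x)) + x := by field_simp; ring
    rw [key]; linarith
  · have := Real.log_le_sub_one_of_pos (show (0:ℝ) < (1+x)/(1-x) by positivity)
    rw [Real.log_div h1.ne' h2.ne'] at this
    have key : (1+x)/(1-x) - 1 = 2*x/(1-x) := by field_simp; ring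
    linarith [key ▸ this]

lemma sin_abs_arg {z : ℂ} (hz1 : z ≠ 1) (hz2 : ¬ (z.im = 0 ∧ 1 ≤ z.re)) :
    Real.sin (|Complex.arg (z - 1)| / 2) = Real.cos (Complex.arg (1 - z) / 2) := by
  have hne : z - 1 ≠ 0 := sub_ne_zero.2 hz1
  have hneg : (1 : ℂ) - z = -(z - 1) := by ring
  rcases lt_trichotomy (z - 1).im 0 with him | him | him
  · rw [hneg, Complex.arg_neg_eq_arg_add_pi_of_im_neg him]
    have h1 : Complex.arg (z - 1) < 0 := Complex.arg_neg_iff.2 him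
    rw [abs_of_neg h1]
    rw [show (Complex.arg (z-1) + Real.pi)/2 = Complex.arg (z-1)/2 + Real.pi/2 by ring,
      Real.cos_add_pi_div_two]
    rw [show -Complex.arg (z-1)/2 = -(Complex.arg (z-1)/2) by ring, Real.sin_neg]
  · have hzim : z.im = 0 := by simpa [Complex.sub_im] using him
    have hre : z.re < 1 := by
      rcases lt_or_ge z.re 1 with h | h
      · exact h
      · exact absurd ⟨hzim, h⟩ hz2
    have h1 : Complex.arg (z - 1) = Real.pi := by
      apply Complex.arg_eq_pi_iff.2
      constructor
      · simp [Complex.sub_re]; linarith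
      · simpa [Complex.sub_im]
    have h2 : Complex.arg (1 - z) = 0 := by
      apply Complex.arg_eq_zero_iff.2
      constructor
      · simp [Complex.sub_re]; linarith
      · simp [Complex.sub_im, hzim]
    rw [h1, h2]
    simp [abs_of_pos Real.pi_pos]
  · rw [hneg, Complex.arg_neg_eq_arg_sub_pi_of_im_pos him]
    have h1 : 0 < Complex.arg (z - 1) := by
      have h0 : 0 ≤ Complex.arg (z - 1) := Complex.arg_nonneg_iff.2 him.le
      rcases h0.lt_or_eq with h | h
      · exact h
      · exfalso
        have := Complex.arg_eq_zero_iff.1 h.symm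
        exact absurd this.2 him.ne'
    rw [abs_of_pos h1,
      show (Complex.arg (z-1) - Real.pi)/2 = Complex.arg (z-1)/2 - Real.pi/2 by ring,
      Real.cos_sub_pi_div_two]

/- ### The auxiliary functions -/

noncomputable def wf (z : ℂ) : ℂ := (1 - z^2) ^ ((1:ℂ)/2)
noncomputable def sf (z : ℂ) : ℂ := (2*(1-z)) ^ ((1:ℂ)/2)
noncomputable def tf (z : ℂ) : ℂ := ((1+z)/2) ^ ((1:ℂ)/2)
noncomputable def Pf (z : ℂ) : ℝ := 1 + Complex.normSq (wf z)
noncomputable def Af (z : ℂ) : ℝ :=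
  (Real.log (Pf z + 2*(wf z).re) - Real.log (Pf z - 2*(wf z).re)) / (4*(wf z).re)
noncomputable def Bf (z : ℂ) : ℝ := (tf z).re + (sf z).im^2/(4*(tf z).re)

section basic
variable {z : ℂ} (hz1 : z ≠ 1) (hz2 : ¬ (z.im = 0 ∧ 1 ≤ z.re)) (hz3 : ‖z - 1‖ < 1/4)

include hz3 in
lemma re_z_big : 3/4 < z.re := by
  have : |z.re - 1| < 1/4 := by
    simpa using lt_of_le_of_lt (by simpa using Complex.abs_re_le_norm (z-1)) hz3
  have := abs_lt.1 this
  linarith [this.1]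

include hz1 in
lemma one_sub_ne : (1 : ℂ) - z ≠ 0 := fun h => hz1 (by linear_combination -h)

include hz3 in
lemma one_add_ne : (1 : ℂ) + z ≠ 0 := by
  intro h
  have h2 := re_z_big hz3
  have : (1 + z).re = 0 := by rw [h]; simp
  simp [Complex.add_re] at this
  linarith

include hz2 in
lemma arg_v_ne_pi : Complex.arg (2 * (1 - z)) ≠ Real.pi := by
  intro h
  rw [Complex.arg_eq_pi_iff] at h
  obtain ⟨hre, him⟩ := h
  simp [Complex.mul_re, Complex.mul_im, Complex.sub_re, Complex.sub_im] at hre him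
  exact hz2 ⟨him, by linarith⟩

include hz2 hz3 in
lemma arg_sum_mem :
    Complex.arg (2 * (1 - z)) + Complex.arg ((1 + z) / 2) ∈ Set.Ioc (-Real.pi) Real.pi := by
  have hv : Complex.arg (2 * (1 - z)) = Complex.arg (1 - z) := Complex.arg_real_mul _ (by norm_num)
  have hu : Complex.arg ((1 + z) / 2) = Complex.arg (1 + z) := by
    rw [div_eq_inv_mul, show ((2:ℂ))⁻¹ = ((2⁻¹ : ℝ) : ℂ) by norm_num]
    exact Complex.arg_real_mul _ (by norm_num)
  rw [hv, hu]
  have hre1z : 0 < (1 + z).re := by simp [Complex.add_re]; linarith [re_z_big hz3]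
  have hhalf : |Complex.arg (1 + z)| < Real.pi / 2 :=
    Complex.abs_arg_lt_pi_div_two_iff.2 (Or.inl hre1z)
  have hpi := Real.pi_pos
  rcases lt_trichotomy z.im 0 with him | him | him
  · have h1 : 0 ≤ Complex.arg (1 - z) := Complex.arg_nonneg_iff.2 (by simp [Complex.sub_im]; linarith)
    have h2 : Complex.arg (1 + z) < 0 := Complex.arg_neg_iff.2 (by simp [Complex.add_im]; linarith)
    have h3 := Complex.arg_le_pi (1 - z)
    constructor
    · nlinarith [abs_lt.1 hhalf]
    · linarith
  · have h1 : Complex.arg (1 - z) = 0 := by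
      rw [Complex.arg_eq_zero_iff]
      constructor
      · simp [Complex.sub_re]
        rcases lt_or_ge z.re 1 with h | h
        · linarith
        · exact absurd ⟨him, h⟩ hz2
      · simp [Complex.sub_im, him]
    have h2 : Complex.arg (1 + z) = 0 := by
      rw [Complex.arg_eq_zero_iff]; constructor
      · simp [Complex.add_re]; linarith [re_z_big hz3]
      · simp [Complex.add_im, him]
    rw [h1, h2]; constructor <;> simp [hpi.le]; linarith
  · have h1 : Complex.arg (1 - z) < 0 := Complex.arg_neg_iff.2 (by simp [Complex.sub_im]; linarith)
    have h2 : 0 ≤ Complex.arg (1 + z) := Complex.arg_nonneg_iff.2 (by simp [Complex.add_im]; linarith)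
    have h3 := Complex.neg_pi_lt_arg (1 - z)
    constructor
    · linarith
    · nlinarith [abs_lt.1 hhalf]

include hz1 hz2 hz3 in
lemma key_facts :
    0 < (sf z).re ∧ 0 < (tf z).re ∧ wf z = sf z * tf z ∧
    (wf z).re = (sf z).re * Bf z ∧ 0 < Bf z ∧ ‖wf z‖ < 1 := by
  have hvne : (2:ℂ)*(1-z) ≠ 0 := mul_ne_zero two_ne_zero (one_sub_ne hz1)
  have hune : ((1:ℂ)+z)/2 ≠ 0 := div_ne_zero (one_add_ne hz3) two_ne_zero
  have hsre : 0 < (sf z).re := sq_re_pos hvne (arg_v_ne_pi hz2)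
  have hure : 0 < (((1:ℂ)+z)/2).re := by
    have : (((1:ℂ)+z)/2).re = (1 + z.re)/2 := by
      simp [Complex.div_re, Complex.add_re, Complex.add_im, Complex.normSq_apply]
    rw [this]; linarith [re_z_big hz3]
  have hargu : Complex.arg (((1:ℂ)+z)/2) ≠ Real.pi := by
    intro h
    rw [Complex.arg_eq_pi_iff] at h
    linarith [h.1]
  have htre : 0 < (tf z).re := sq_re_pos hune hargu
  have hw_eq : wf z = sf z * tf z := by
    rw [wf, show (1:ℂ) - z^2 = (2*(1-z)) * ((1+z)/2) by ring,
      sq_mul hvne hune (arg_sum_mem hz2 hz3)]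
    rfl
  have hs2 : (sf z)^2 = 2*(1-z) := sq_sq hvne
  have ht2 : (tf z)^2 = (1+z)/2 := sq_sq hune
  have hsim : (sf z).re * (sf z).im = -z.im := by
    have := congrArg Complex.im hs2
    simp [pow_two, Complex.mul_im, Complex.mul_re, Complex.sub_im] at this
    linarith
  have htim : 2 * ((tf z).re * (tf z).im) = z.im / 2 := by
    have := congrArg Complex.im ht2
    have h2 : (((1:ℂ)+z)/2).im = z.im/2 := by
      simp [Complex.div_im, Complex.add_im, Complex.add_re, Complex.normSq_apply]
    rw [h2] at this
    simp [pow_two, Complex.mul_im] at this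
    linarith
  have ha : (wf z).re = (sf z).re * Bf z := by
    rw [hw_eq, Complex.mul_re, Bf]
    field_simp
    linear_combination (-2*(sf z).im) * htim + (-(sf z).im) * hsim
  have hBpos : 0 < Bf z := by
    rw [Bf]
    have : 0 ≤ (sf z).im^2/(4*(tf z).re) := by positivity
    linarith
  have hne12 : (1:ℂ) - z^2 ≠ 0 := by
    have : (1:ℂ) - z^2 = (1-z)*(1+z) := by ring
    rw [this]
    exact mul_ne_zero (one_sub_ne hz1) (one_add_ne hz3)
  have habsw : ‖wf z‖ < 1 := by
    have hw2 : (wf z)^2 = 1 - z^2 := sq_sq hne12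
    have h2 : ‖wf z‖^2 = ‖1 - z^2‖ := by
      rw [← norm_pow, hw2]
    have h3 : ‖1 - z^2‖ = ‖1-z‖ * ‖1+z‖ := by
      rw [show (1:ℂ) - z^2 = (1-z)*(1+z) by ring, norm_mul]
    have h4 : ‖1+z‖ ≤ 9/4 := by
      have : (1:ℂ) + z = 2 + (z - 1) := by ring
      rw [this]
      calc ‖2 + (z-1)‖ ≤ ‖2‖ + ‖z-1‖ := norm_add_le _ _
        _ ≤ 9/4 := by rw [Complex.norm_two]; linarith
    have h5 : ‖1-z‖ < 1/4 := by
      rw [norm_sub_rev]; exact hz3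
    have h6 : ‖wf z‖^2 < 1 := by
      rw [h2, h3]
      calc ‖1-z‖ * ‖1+z‖ ≤ ‖1-z‖ * (9/4) := by
            exact mul_le_mul_of_nonneg_left h4 (norm_nonneg _)
        _ < 1 := by nlinarith [norm_nonneg (1-z)]
    nlinarith [norm_nonneg (wf z)]
  exact ⟨hsre, htre, hw_eq, ha, hBpos, habsw⟩

include hz1 hz2 hz3 in
lemma ratio_eq :
    (-Real.log (‖fSOR z‖)) /
      (2 * Real.sqrt 2 * Real.sin (|Complex.arg (z - 1)| / 2)
        * Real.sqrt (‖1 - z‖)) = Af z * Bf z := by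
  obtain ⟨hsre, htre, hw_eq, ha, hBpos, habsw⟩ := key_facts hz1 hz2 hz3
  have hvne : (2:ℂ)*(1-z) ≠ 0 := mul_ne_zero two_ne_zero (one_sub_ne hz1)
  have h1w : (1:ℂ) + wf z ≠ 0 := by
    intro h
    have hwe : wf z = -1 := by linear_combination h
    rw [hwe] at habsw; simp at habsw
  have h1w' : (1:ℂ) - wf z ≠ 0 := by
    intro h
    have hwe : wf z = 1 := by linear_combination -h
    rw [hwe] at habsw; simp at habsw
  have hfod : fSOR z = (1 - wf z)/(1 + wf z) := by
    have h0 : fSOR z = 2/(1 + wf z) - 1 := rfl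
    rw [h0]
    field_simp
    ring
  have hA : Pf z + 2*(wf z).re = Complex.normSq (1 + wf z) := by
    simp [Pf, Complex.normSq_apply, Complex.add_re, Complex.add_im]; ring
  have hB : Pf z - 2*(wf z).re = Complex.normSq (1 - wf z) := by
    simp [Pf, Complex.normSq_apply, Complex.sub_re, Complex.sub_im]; ring
  have hlognum : -Real.log (‖fSOR z‖) =
      (Real.log (Pf z + 2*(wf z).re) - Real.log (Pf z - 2*(wf z).re))/2 := by
    rw [hfod, norm_div,
      Real.log_div (norm_ne_zero_iff.mpr h1w') (norm_ne_zero_iff.mpr h1w),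
      hA, hB, Complex.norm_def, Complex.norm_def,
      Real.log_sqrt (Complex.normSq_nonneg _), Real.log_sqrt (Complex.normSq_nonneg _)]
    ring
  have hden : 2 * Real.sqrt 2 * Real.sin (|Complex.arg (z - 1)| / 2)
      * Real.sqrt (‖1 - z‖) = 2*(sf z).re := by
    have h0 : (sf z).re = Real.sqrt (‖2*(1-z)‖)
        * Real.cos (Complex.arg (2*(1-z)) / 2) := sq_re_eq hvne
    have h1 : ‖(2:ℂ)*(1-z)‖ = 2 * ‖1-z‖ := by
      rw [norm_mul, Complex.norm_two]
    have h2 : Complex.arg ((2:ℂ)*(1-z)) = Complex.arg (1-z) :=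
      Complex.arg_real_mul _ (by norm_num)
    rw [h0, h1, h2, Real.sqrt_mul (by norm_num : (0:ℝ) ≤ 2), sin_abs_arg hz1 hz2]
    ring
  rw [hlognum, hden]
  rw [Af, ha]
  have hBne := hBpos.ne'
  have hsne := hsre.ne'
  field_simp
  ring
end basic

theorem stmt17 :
    Tendsto
      (fun z : ℂ =>
        (-Real.log (‖fSOR z‖)) /
          (2 * Real.sqrt 2 * Real.sin (|Complex.arg (z - 1)| / 2)
            * Real.sqrt (‖1 - z‖)))
      (nhdsWithin 1 {z : ℂ | 0 ≤ z.re ∧ ¬ (z.im = 0 ∧ 1 ≤ z.re)})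
      (nhds 1) := by
  set l := nhdsWithin (1:ℂ) {z : ℂ | 0 ≤ z.re ∧ ¬ (z.im = 0 ∧ 1 ≤ z.re)} with hl
  -- eventual good region
  have hev : ∀ᶠ z in l, z ≠ 1 ∧ ¬ (z.im = 0 ∧ 1 ≤ z.re) ∧ ‖z - 1‖ < 1/4 := by
    have h1 : ∀ᶠ z in l, z ∈ {z : ℂ | 0 ≤ z.re ∧ ¬ (z.im = 0 ∧ 1 ≤ z.re)} :=
      eventually_mem_nhdsWithin
    have h2 : ∀ᶠ z : ℂ in l, ‖z - 1‖ < 1/4 := by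
      apply eventually_nhdsWithin_of_eventually_nhds
      have : ∀ᶠ z : ℂ in nhds 1, dist z 1 < 1/4 :=
        Metric.eventually_nhds_iff.2 ⟨1/4, by norm_num, fun {y} hy => hy⟩
      simpa [Complex.dist_eq] using this
    filter_upwards [h1, h2] with z hzS hzb
    refine ⟨?_, hzS.2, hzb⟩
    intro h
    rw [h] at hzS
    exact hzS.2 ⟨rfl, le_refl 1⟩
  -- |wf| → 0
  have habsw0 : Tendsto (fun z => ‖wf z‖) l (nhds 0) := by
    have heq : (fun z : ℂ => ‖wf z‖)
        = fun z : ℂ => Real.sqrt (‖1 - z^2‖) :=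
      funext fun z => abs_sq_eq _
    rw [heq]
    have hc : ContinuousAt (fun z : ℂ => Real.sqrt (‖1 - z^2‖)) 1 := by
      apply Real.continuous_sqrt.continuousAt.comp
      exact (continuous_norm.comp (by continuity)).continuousAt
    have h0 : Tendsto (fun z : ℂ => Real.sqrt (‖1 - z^2‖)) (nhds 1) (nhds 0) := by
      simpa using hc.tendsto
    exact h0.mono_left nhdsWithin_le_nhds
  -- |sf| → 0
  have habss0 : Tendsto (fun z => ‖sf z‖) l (nhds 0) := by
    have heq : (fun z : ℂ => ‖sf z‖)
        = fun z : ℂ => Real.sqrt (‖2*(1 - z)‖) :=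
      funext fun z => abs_sq_eq _
    rw [heq]
    have hc : ContinuousAt (fun z : ℂ => Real.sqrt (‖2*(1 - z)‖)) 1 := by
      apply Real.continuous_sqrt.continuousAt.comp
      exact (continuous_norm.comp (by continuity)).continuousAt
    have h0 : Tendsto (fun z : ℂ => Real.sqrt (‖2*(1 - z)‖)) (nhds 1) (nhds 0) := by
      simpa using hc.tendsto
    exact h0.mono_left nhdsWithin_le_nhds
  -- tf → 1
  have htt : Tendsto tf l (nhds 1) := by
    have hmid : Tendsto (fun z : ℂ => (1+z)/2) (nhds 1) (nhds 1) :=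
      (by continuity : Continuous fun z : ℂ => (1+z)/2).tendsto' 1 1 (by norm_num)
    exact (tendsto_sq_one.comp hmid).mono_left nhdsWithin_le_nhds
  have htre1 : Tendsto (fun z => (tf z).re) l (nhds 1) := by
    have := (Complex.continuous_re.tendsto (1:ℂ)).comp htt
    exact this
  have hsim0 : Tendsto (fun z => (sf z).im) l (nhds 0) := by
    apply squeeze_zero_norm (fun z => ?_) habss0
    exact Complex.abs_im_le_norm _
  -- Bf → 1
  have hB1 : Tendsto Bf l (nhds 1) := by
    have h1 : Tendsto (fun z => (sf z).im^2) l (nhds 0) := by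
      have := hsim0.pow 2
      simpa using this
    have h2 : Tendsto (fun z => 4*(tf z).re) l (nhds 4) := by
      have := htre1.const_mul (4:ℝ)
      simpa using this
    have h3 : Tendsto (fun z => (sf z).im^2/(4*(tf z).re)) l (nhds 0) := by
      have := h1.div h2 (by norm_num)
      rw [zero_div] at this; exact this
    have := htre1.add h3
    rw [add_zero] at this; exact this
  -- Pf → 1
  have hP1 : Tendsto Pf l (nhds 1) := by
    have heq : Pf = fun z => 1 + ‖wf z‖^2 := by
      funext z; rw [Pf, Complex.normSq_eq_norm_sq]
    rw [heq]
    have h1 : Tendsto (fun z => ‖wf z‖^2) l (nhds 0) := by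
      have := habsw0.pow 2
      simpa using this
    have := tendsto_const_nhds.add h1 (f := fun _ : ℂ => (1:ℝ))
    simpa using this
  -- key facts eventually
  have hevK : ∀ᶠ z in l, 0 < (wf z).re ∧ (wf z).re ≤ ‖wf z‖ ∧
      ‖wf z‖ < 1 ∧ 1 ≤ Pf z := by
    filter_upwards [hev] with z hz
    obtain ⟨hz1, hz2, hz3⟩ := hz
    obtain ⟨hsre, htre, hw_eq, ha, hBpos, habsw⟩ := key_facts hz1 hz2 hz3
    refine ⟨ha ▸ mul_pos hsre hBpos, Complex.re_le_norm _, habsw, ?_⟩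
    rw [Pf]
    have := Complex.normSq_nonneg (wf z)
    linarith
  -- x → 0
  obtain ⟨x, hxdef⟩ : ∃ x : ℂ → ℝ, x = fun z => 2*(wf z).re / Pf z := ⟨_, rfl⟩
  have hx0 : Tendsto x l (nhds 0) := by
    apply squeeze_zero' (g := fun z => 2 * ‖wf z‖)
    · filter_upwards [hevK] with z hz
      simp only [hxdef]
      exact div_nonneg (by linarith [hz.1]) (by linarith [hz.2.2.2])
    · filter_upwards [hevK] with z hz
      obtain ⟨h1, h2, h3, h4⟩ := hz
      simp only [hxdef]
      calc 2*(wf z).re / Pf z ≤ 2*(wf z).re / 1 := by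
            apply div_le_div_of_nonneg_left (by linarith) one_pos h4
        _ = 2*(wf z).re := by ring
        _ ≤ 2 * ‖wf z‖ := by linarith
    · have := habsw0.const_mul (2:ℝ)
      simpa using this
  have hxev : ∀ᶠ z in l, 0 < x z ∧ x z < 1 := by
    filter_upwards [hevK] with z hz
    obtain ⟨h1, h2, h3, h4⟩ := hz
    simp only [hxdef]
    constructor
    · exact div_pos (by linarith) (by linarith)
    · rw [div_lt_one (by linarith)]
      have : Pf z = 1 + ‖wf z‖^2 := by rw [Pf, Complex.normSq_eq_norm_sq]
      rw [this]
      nlinarith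
  -- Af → 1 via squeeze
  have hAf1 : Tendsto Af l (nhds 1) := by
    have hAfeq : ∀ᶠ z in l, Af z = (Real.log (1 + x z) - Real.log (1 - x z)) / (2 * x z * Pf z) := by
      filter_upwards [hevK, hxev] with z hz hx
      obtain ⟨h1, h2, h3, h4⟩ := hz
      have hP0 : (0:ℝ) < Pf z := by linarith
      have e1 : Pf z + 2*(wf z).re = Pf z * (1 + x z) := by
        rw [hxdef]; field_simp
      have e2 : Pf z - 2*(wf z).re = Pf z * (1 - x z) := by
        rw [hxdef]; field_simp; try ring
      rw [Af, e1, e2, Real.log_mul hP0.ne' (by linarith [hx.1]),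
        Real.log_mul hP0.ne' (by linarith [hx.2])]
      have e3 : (4:ℝ)*(wf z).re = 2 * x z * Pf z := by
        rw [hxdef]; field_simp; try ring
      rw [e3]
      ring
    -- bounds
    have hlow : ∀ᶠ z in l, (2 + x z)/(2 * Pf z * (1 + x z)) ≤ Af z := by
      filter_upwards [hAfeq, hxev, hevK] with z hAe hx hz
      obtain ⟨hx1, hx2⟩ := hx
      have hP0 : (0:ℝ) < Pf z := by linarith [hz.2.2.2]
      rw [hAe]
      have hb := (log_bounds hx1 hx2).1
      have hd : (0:ℝ) < 2 * x z * Pf z := by positivity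
      have hxne : x z ≠ 0 := hx1.ne'
      have hPne : Pf z ≠ 0 := hP0.ne'
      have h1x : (0:ℝ) < 1 + x z := by linarith
      calc (2 + x z)/(2 * Pf z * (1 + x z))
          = (x z*(2 + x z)/(1 + x z)) / (2 * x z * Pf z) := by
            have h1xne : (1:ℝ) + x z ≠ 0 := h1x.ne'
            field_simp
        _ ≤ (Real.log (1 + x z) - Real.log (1 - x z)) / (2 * x z * Pf z) := by
            gcongr
    have hhigh : ∀ᶠ z in l, Af z ≤ 1/(Pf z * (1 - x z)) := by
      filter_upwards [hAfeq, hxev, hevK] with z hAe hx hz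
      obtain ⟨hx1, hx2⟩ := hx
      have hP0 : (0:ℝ) < Pf z := by linarith [hz.2.2.2]
      rw [hAe]
      have hb := (log_bounds hx1 hx2).2
      have hd : (0:ℝ) < 2 * x z * Pf z := by positivity
      have hxne : x z ≠ 0 := hx1.ne'
      have hPne : Pf z ≠ 0 := hP0.ne'
      have h1x : (0:ℝ) < 1 - x z := by linarith
      calc (Real.log (1 + x z) - Real.log (1 - x z)) / (2 * x z * Pf z)
          ≤ (2 * x z/(1 - x z)) / (2 * x z * Pf z) := by gcongr
        _ = 1/(Pf z * (1 - x z)) := by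
            have h1xne : (1:ℝ) - x z ≠ 0 := h1x.ne'
            field_simp
    have hlowt : Tendsto (fun z => (2 + x z)/(2 * Pf z * (1 + x z))) l (nhds 1) := by
      have h1 : Tendsto (fun z => 2 + x z) l (nhds 2) := by
        have := tendsto_const_nhds.add hx0 (f := fun _ : ℂ => (2:ℝ)); simpa using this
      have h2 : Tendsto (fun z => 2 * Pf z * (1 + x z)) l (nhds 2) := by
        have ha : Tendsto (fun z => 2 * Pf z) l (nhds 2) := by
          have := hP1.const_mul (2:ℝ); simpa using this
        have hb : Tendsto (fun z => 1 + x z) l (nhds 1) := by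
          have := tendsto_const_nhds.add hx0 (f := fun _ : ℂ => (1:ℝ)); simpa using this
        have := ha.mul hb; simpa using this
      have := h1.div h2 (by norm_num)
      rw [div_self two_ne_zero] at this; exact this
    have hhight : Tendsto (fun z => 1/(Pf z * (1 - x z))) l (nhds 1) := by
      have h2 : Tendsto (fun z => Pf z * (1 - x z)) l (nhds 1) := by
        have hb : Tendsto (fun z => 1 - x z) l (nhds 1) := by
          have := tendsto_const_nhds.sub hx0 (f := fun _ : ℂ => (1:ℝ)); simpa using this
        have := hP1.mul hb; simpa using this
      have h3 : Tendsto (fun z => (1:ℝ)/(Pf z * (1 - x z))) l (nhds (1/1)) :=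
        Tendsto.div tendsto_const_nhds h2 one_ne_zero
      simpa using h3
    exact tendsto_of_tendsto_of_tendsto_of_le_of_le' hlowt hhight hlow hhigh
  -- conclude
  have hprod : Tendsto (fun z => Af z * Bf z) l (nhds 1) := by
    have := hAf1.mul hB1
    simpa using this
  apply hprod.congr'
  filter_upwards [hev] with z hz
  exact (ratio_eq hz.1 hz.2.1 hz.2.2).symm
end
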